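/- Let F = ⟨W,R⟩ be a finite rooted transitive frame validating Wid_1^+, and let c be the initial cluster of F (the cluster of a root). Then the restriction of F to the set of points strictly above c (c↑ minus c) decomposes as a disjoint union of subframes F_1,…,F_n such that for each i, the inverse skeleton sk(F_i)^{-1} is a finite tree. -/

import Mathlib

/-- A Kripke frame: a set of worlds with a binary relation. -/
structure Frame where
  World : Type
  rel : World → World → Prop

/-- `f` is a reduction (surjective p-morphism) of `F` to `G`. -/
def Reduction (F G : Frame) (f : F.World → G.World) : Prop :=
  Function.Surjective f ∧
  (∀ w u, F.rel w u → G.rel (f w) (f u)) ∧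
  (∀ w v, G.rel (f w) v → ∃ u, F.rel w u ∧ f u = v)

/-- `F` is reducible to `G`. -/
def Reducible (F G : Frame) : Prop := ∃ f, Reduction F G f

/-- The subframe of `F` generated by the point `w`. -/
def Frame.genSub (F : Frame) (w : F.World) : Frame :=
  ⟨{v // Relation.ReflTransGen F.rel w v}, fun a b => F.rel a.1 b.1⟩

/-- Modal formulas over countably many propositional variables. -/
inductive Formula where
  | var : ℕ → Formula
  | bot : Formula
  | imp : Formula → Formula → Formula
  | box : Formula → Formula
deriving DecidableEq

namespace Formula

def neg (a : Formula) : Formula := .imp a .bot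
def top : Formula := .imp .bot .bot
def and (a b : Formula) : Formula := neg (.imp a (neg b))
def or (a b : Formula) : Formula := .imp (neg a) b
def dia (a : Formula) : Formula := neg (.box (neg a))

/-- Finite conjunction of a list of formulas. -/
def bigConj (l : List Formula) : Formula := l.foldr and top

/-- Finite disjunction of a list of formulas. -/
def bigDisj (l : List Formula) : Formula := l.foldr or .bot

end Formula

/-- Kripke satisfaction of a formula at a world of `F` under valuation `V`. -/
def Sat (F : Frame) (V : ℕ → F.World → Prop) : F.World → Formula → Prop
  | w, .var n => V n w
  | _, .bot => False
  | w, .imp a b => Sat F V w a → Sat F V w b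
  | w, .box a => ∀ u, F.rel w u → Sat F V u a

/-- `φ` is valid at the point `w` of `F` (true under all valuations). -/
def SatAll (F : Frame) (w : F.World) (φ : Formula) : Prop := ∀ V, Sat F V w φ

/-- `φ` is valid in the frame `F`. -/
def Valid (F : Frame) (φ : Formula) : Prop := ∀ V w, Sat F V w φ

/-- The weak width formula `Wid_n^+`, with `q` encoded as variable `0` and
`p_i` as variable `i+1`:
`q ∧ ◇(□¬q ∧ ⋀_{i≤n} ◇p_i) → ⋁_{0 ≤ i ≠ j ≤ n} ◇(p_i ∧ (p_j ∨ ◇p_j))`. -/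
def widPlus (n : ℕ) : Formula :=
  .imp
    (.and (.var 0)
      (Formula.dia (.and (.box (Formula.neg (.var 0)))
        (Formula.bigConj ((List.finRange (n + 1)).map fun i => Formula.dia (.var (i + 1)))))))
    (Formula.bigDisj ((List.finRange (n + 1)).flatMap fun i =>
      (List.finRange (n + 1)).flatMap fun j =>
        if i = j then []
        else [Formula.dia (.and (.var (i + 1))
          (.or (.var (j + 1)) (Formula.dia (.var (j + 1)))))]))

/-- The restriction of a frame to a subset of its worlds. -/
def Frame.restrict (F : Frame) (X : Set F.World) : Frame :=
  ⟨{x // x ∈ X}, fun a b => F.rel a.1 b.1⟩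

/-- Cluster equivalence: `w ∼ u` iff `w = u` or `R w u ∧ R u w`. -/
def clEq (F : Frame) (w u : F.World) : Prop :=
  w = u ∨ (F.rel w u ∧ F.rel u w)

/-- `w ≤ u` in the inverse of the reflexive closure of the skeleton order:
`w`'s cluster is `≥` `u`'s cluster in the original order. -/
def leInv (F : Frame) (w u : F.World) : Prop := clEq F w u ∨ F.rel u w

/-- The inverse skeleton `sk(F)⁻¹` of `F` is a finite tree: the frame is
finite, and the induced order on clusters is downward connected and has no
downward branching (it is automatically a partial order on clusters). -/
def SkInvTree (F : Frame) : Prop :=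
  Finite F.World ∧
  (∀ m m' : F.World, ∃ w, leInv F w m ∧ leInv F w m') ∧
  (∀ m w w' : F.World, leInv F w m → leInv F w' m → (leInv F w w' ∨ leInv F w' w))

section Aux

lemma sat_and_iff (F : Frame) (V : ℕ → F.World → Prop) (x : F.World) (a b : Formula) :
    Sat F V x (.and a b) ↔ Sat F V x a ∧ Sat F V x b := by
  simp only [Formula.and, Formula.neg, Sat]; tauto

lemma sat_or_iff (F : Frame) (V : ℕ → F.World → Prop) (x : F.World) (a b : Formula) :
    Sat F V x (.or a b) ↔ Sat F V x a ∨ Sat F V x b := by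
  simp only [Formula.or, Formula.neg, Sat]; tauto

lemma sat_dia_iff (F : Frame) (V : ℕ → F.World → Prop) (x : F.World) (a : Formula) :
    Sat F V x (.dia a) ↔ ∃ y, F.rel x y ∧ Sat F V y a := by
  simp only [Formula.dia, Formula.neg, Sat]
  constructor
  · intro h; by_contra hc; push_neg at hc
    exact h fun u hu hs => hc u hu hs
  · rintro ⟨y, hy, hs⟩ h; exact h y hy hs

lemma widPlus_one_eq : widPlus 1 = .imp
    (.and (.var 0) (Formula.dia (.and (.box (Formula.neg (.var 0)))
      (.and (Formula.dia (.var 1)) (.and (Formula.dia (.var 2)) Formula.top)))))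
    (.or (Formula.dia (.and (.var 1) (.or (.var 2) (Formula.dia (.var 2)))))
      (.or (Formula.dia (.and (.var 2) (.or (.var 1) (Formula.dia (.var 1))))) .bot)) := by
  decide

end Aux
def sqle (F : Frame) (a b : F.World) : Prop := clEq F a b ∨ F.rel a b

lemma clEq_refl (F : Frame) (a : F.World) : clEq F a a := Or.inl rfl

lemma clEq_symm {F : Frame} {a b : F.World} (h : clEq F a b) : clEq F b a := by
  rcases h with rfl | ⟨h1, h2⟩
  · exact Or.inl rfl
  · exact Or.inr ⟨h2, h1⟩

lemma clEq_trans {F : Frame} (htr : ∀ a b c, F.rel a b → F.rel b c → F.rel a c)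
    {a b c : F.World} (h1 : clEq F a b) (h2 : clEq F b c) : clEq F a c := by
  rcases h1 with rfl | ⟨h1, h1'⟩
  · exact h2
  · rcases h2 with rfl | ⟨h2, h2'⟩
    · exact Or.inr ⟨h1, h1'⟩
    · exact Or.inr ⟨htr _ _ _ h1 h2, htr _ _ _ h2' h1'⟩

lemma sqle_refl (F : Frame) (a : F.World) : sqle F a a := Or.inl (Or.inl rfl)

lemma sqle_trans {F : Frame} (htr : ∀ a b c, F.rel a b → F.rel b c → F.rel a c)
    {a b c : F.World} (h1 : sqle F a b) (h2 : sqle F b c) : sqle F a c := by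
  rcases h1 with h1 | h1
  · rcases h2 with h2 | h2
    · exact Or.inl (clEq_trans htr h1 h2)
    · rcases h1 with rfl | ⟨ha, hb⟩
      · exact Or.inr h2
      · exact Or.inr (htr _ _ _ ha h2)
  · rcases h2 with h2 | h2
    · rcases h2 with rfl | ⟨hb, hc⟩
      · exact Or.inr h1
      · exact Or.inr (htr _ _ _ h1 hb)
    · exact Or.inr (htr _ _ _ h1 h2)

lemma key_lemma (F : Frame) (htr : ∀ a b c, F.rel a b → F.rel b c → F.rel a c)
    (hw : Valid F (widPlus 1)) (w v u1 u2 : F.World)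
    (hwv : F.rel w v) (hvc : ¬ clEq F w v)
    (h1 : F.rel v u1) (h2 : F.rel v u2) :
    u1 = u2 ∨ F.rel u1 u2 ∨ F.rel u2 u1 := by
  classical
  set V : ℕ → F.World → Prop :=
    fun n x => if n = 0 then clEq F w x else if n = 1 then x = u1 else x = u2 with hV
  have H := hw V w
  rw [widPlus_one_eq] at H
  have hA : Sat F V w (.and (.var 0) (Formula.dia (.and (.box (Formula.neg (.var 0)))
      (.and (Formula.dia (.var 1)) (.and (Formula.dia (.var 2)) Formula.top))))) := by
    rw [sat_and_iff]
    constructor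
    · show V 0 w
      simp only [hV, if_pos rfl]
      exact Or.inl rfl
    · rw [sat_dia_iff]
      refine ⟨v, hwv, ?_⟩
      rw [sat_and_iff]
      constructor
      · intro u hu h0
        have h0' : clEq F w u := by
          have : V 0 u := h0
          simpa [hV] using this
        rcases h0' with rfl | ⟨hwu, huw⟩
        · exact hvc (Or.inr ⟨hwv, hu⟩)
        · exact hvc (Or.inr ⟨hwv, htr _ _ _ hu huw⟩)
      · rw [sat_and_iff, sat_dia_iff]
        refine ⟨⟨u1, h1, by show V 1 u1; simp [hV]⟩, ?_⟩
        rw [sat_and_iff, sat_dia_iff]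
        refine ⟨⟨u2, h2, by show V 2 u2; simp [hV]⟩, fun h => h⟩
  have hB := H hA
  rw [sat_or_iff, sat_or_iff] at hB
  rcases hB with hB | hB | hB
  · rw [sat_dia_iff] at hB
    obtain ⟨z, hz, hsz⟩ := hB
    rw [sat_and_iff] at hsz
    obtain ⟨hz1, hz2⟩ := hsz
    have hz1' : z = u1 := by
      have : V 1 z := hz1
      simpa [hV] using this
    subst hz1'
    rw [sat_or_iff, sat_dia_iff] at hz2
    rcases hz2 with hz2 | ⟨y, hy, hys⟩
    · left
      have : V 2 z := hz2
      simpa [hV] using this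
    · right; left
      have : V 2 y := hys
      have hy2 : y = u2 := by simpa [hV] using this
      subst hy2; exact hy
  · rw [sat_dia_iff] at hB
    obtain ⟨z, hz, hsz⟩ := hB
    rw [sat_and_iff] at hsz
    obtain ⟨hz1, hz2⟩ := hsz
    have hz1' : z = u2 := by
      have : V 2 z := hz1
      simpa [hV] using this
    subst hz1'
    rw [sat_or_iff, sat_dia_iff] at hz2
    rcases hz2 with hz2 | ⟨y, hy, hys⟩
    · left
      have : V 1 z := hz2
      exact (by simpa [hV] using this : z = u1).symm
    · right; right
      have : V 1 y := hys
      have hy2 : y = u1 := by simpa [hV] using this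
      subst hy2; exact hy
  · exact absurd hB (by simp [Sat])
lemma leInv_restrict_iff (F : Frame) (X : Set F.World) (a b : (F.restrict X).World) :
    leInv (F.restrict X) a b ↔ sqle F b.1 a.1 := by
  show (clEq (F.restrict X) a b ∨ (F.restrict X).rel b a) ↔
    (clEq F b.1 a.1 ∨ F.rel b.1 a.1)
  unfold clEq Frame.restrict
  dsimp
  constructor
  · rintro ((h | ⟨h1, h2⟩) | h)
    · exact Or.inl (Or.inl (congrArg Subtype.val h).symm)
    · exact Or.inl (Or.inr ⟨h2, h1⟩)
    · exact Or.inr h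
  · rintro ((h | ⟨h1, h2⟩) | h)
    · exact Or.inl (Or.inl (Subtype.ext h.symm))
    · exact Or.inl (Or.inr ⟨h2, h1⟩)
    · exact Or.inr h
/-- Let `F` be a finite rooted transitive frame validating `Wid₁⁺`, with root
`w` and initial cluster `c` (the cluster of `w`). Then the set `c↑⁻` of points
strictly above `c` decomposes as a disjoint union of nonempty subframes (with
no relations between distinct parts, each part closed under successors within
`c↑⁻`), each of whose inverse skeletons is a finite tree. -/
theorem initial_cluster_decomposition (F : Frame)
    (hfin : Finite F.World)
    (htr : ∀ a b c, F.rel a b → F.rel b c → F.rel a c)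
    (w : F.World) (hroot : ∀ u, u = w ∨ F.rel w u)
    (hw : Valid F (widPlus 1)) :
    ∃ (n : ℕ) (P : Fin n → Set F.World),
      (∀ i, (P i).Nonempty) ∧
      (∀ i j, i ≠ j → Disjoint (P i) (P j)) ∧
      (⋃ i, P i) = {v | v ∉ {u | clEq F w u} ∧ ∃ x ∈ {u | clEq F w u}, F.rel x v} ∧
      (∀ i j, i ≠ j → ∀ a ∈ P i, ∀ b ∈ P j, ¬ F.rel a b) ∧
      (∀ i, ∀ a ∈ P i, ∀ b, F.rel a b → b ∈ {u | clEq F w u} ∨ b ∈ P i) ∧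
      (∀ i, SkInvTree (F.restrict (P i))) := by
  classical
  haveI := hfin
  set S : Set F.World :=
    {v | v ∉ {u | clEq F w u} ∧ ∃ x ∈ {u | clEq F w u}, F.rel x v} with hSdef
  have hmemS : ∀ v, v ∈ S ↔ ¬ clEq F w v := by
    intro v
    constructor
    · rintro ⟨h, -⟩; exact h
    · intro h
      refine ⟨h, w, Or.inl rfl, ?_⟩
      rcases hroot v with rfl | hr
      · exact absurd (Or.inl rfl) h
      · exact hr
  have hRwS : ∀ v ∈ S, F.rel w v := by
    intro v hv
    rcases hroot v with rfl | h
    · exact absurd (Or.inl rfl) ((hmemS v).1 hv)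
    · exact h
  have hup : ∀ a ∈ S, ∀ u, sqle F a u → u ∈ S := by
    intro a ha u hau
    rw [hmemS] at ha ⊢
    intro hcu
    apply ha
    rcases hau with hau | hau
    · exact clEq_trans htr hcu (clEq_symm hau)
    · -- F.rel a u, clEq F w u ⟹ F.rel a w
      have hRwa : F.rel w a := by
        rcases hroot a with rfl | h
        · exact absurd (Or.inl rfl) ha
        · exact h
      rcases hcu with rfl | ⟨hwu, huw⟩
      · exact Or.inr ⟨hRwa, hau⟩
      · exact Or.inr ⟨hRwa, htr _ _ _ hau huw⟩
  have comp : ∀ v ∈ S, ∀ u1 u2, sqle F v u1 → sqle F v u2 →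
      sqle F u1 u2 ∨ sqle F u2 u1 := by
    intro v hv u1 u2 h1 h2
    rcases h1 with h1 | h1 <;> rcases h2 with h2 | h2
    · exact Or.inl (Or.inl (clEq_trans htr (clEq_symm h1) h2))
    · refine Or.inl (Or.inr ?_)
      rcases h1 with rfl | ⟨ha, hb⟩
      · exact h2
      · exact htr _ _ _ hb h2
    · refine Or.inr (Or.inr ?_)
      rcases h2 with rfl | ⟨ha, hb⟩
      · exact h1
      · exact htr _ _ _ hb h1
    · rcases key_lemma F htr hw w v u1 u2 (hRwS v hv) ((hmemS v).1 hv) h1 h2 with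
        rfl | h | h
      · exact Or.inl (sqle_refl F u1)
      · exact Or.inl (Or.inr h)
      · exact Or.inr (Or.inr h)
  set sim : F.World → F.World → Prop :=
    fun a b => ∃ u, sqle F a u ∧ sqle F b u with hsim
  have sim_refl : ∀ a, sim a a := fun a => ⟨a, sqle_refl F a, sqle_refl F a⟩
  have sim_symm : ∀ a b, sim a b → sim b a := by
    rintro a b ⟨u, h1, h2⟩; exact ⟨u, h2, h1⟩
  have sim_trans : ∀ a b c, b ∈ S → sim a b → sim b c → sim a c := by
    rintro a b c hb ⟨u, hau, hbu⟩ ⟨u', hbu', hcu'⟩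
    rcases comp b hb u u' hbu hbu' with h | h
    · exact ⟨u', sqle_trans htr hau h, hcu'⟩
    · exact ⟨u, hau, sqle_trans htr hcu' h⟩
  set cls : F.World → Set F.World := fun a => {b | b ∈ S ∧ sim a b} with hcls
  have cls_eq : ∀ a ∈ S, ∀ b ∈ S, sim a b → cls a = cls b := by
    intro a ha b hb hab
    ext y
    simp only [hcls, Set.mem_setOf_eq]
    constructor
    · rintro ⟨hy, hay⟩; exact ⟨hy, sim_trans b a y ha (sim_symm a b hab) hay⟩
    · rintro ⟨hy, hby⟩; exact ⟨hy, sim_trans a b y hb hab hby⟩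
  have rel_sim : ∀ a b, F.rel a b → sim a b :=
    fun a b h => ⟨b, Or.inr h, sqle_refl F b⟩
  have hCfin : (cls '' S).Finite := (Set.toFinite S).image cls
  haveI := hCfin.to_subtype
  obtain ⟨n, ⟨e⟩⟩ := Finite.exists_equiv_fin ↥(cls '' S)
  set P : Fin n → Set F.World := fun i => (e.symm i).1 with hP
  have hrep : ∀ i, ∃ a ∈ S, P i = cls a := by
    intro i
    obtain ⟨a, ha, hac⟩ := (e.symm i).2
    exact ⟨a, ha, hac.symm⟩
  have hinj : ∀ i j, P i = P j → i = j := by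
    intro i j h
    have : e.symm i = e.symm j := Subtype.ext h
    exact e.symm.injective this
  have hmemP : ∀ i v, v ∈ P i → v ∈ S := by
    intro i v hv
    obtain ⟨a, ha, hPa⟩ := hrep i
    rw [hPa] at hv
    exact hv.1
  have hcommon : ∀ i j x, x ∈ P i → x ∈ P j → i = j := by
    intro i j x hxi hxj
    obtain ⟨a, ha, hPa⟩ := hrep i
    obtain ⟨b, hb, hPb⟩ := hrep j
    rw [hPa] at hxi; rw [hPb] at hxj
    apply hinj
    rw [hPa, hPb]
    exact cls_eq a ha b hb
      (sim_trans a x b hxi.1 hxi.2 (sim_symm b x hxj.2))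
  have hself : ∀ a ∈ S, ∃ i, P i = cls a := by
    intro a ha
    refine ⟨e ⟨cls a, Set.mem_image_of_mem cls ha⟩, ?_⟩
    show (e.symm (e ⟨cls a, _⟩)).1 = cls a
    rw [Equiv.symm_apply_apply]
  refine ⟨n, P, ?_, ?_, ?_, ?_, ?_, ?_⟩
  · -- nonempty
    intro i
    obtain ⟨a, ha, hPa⟩ := hrep i
    exact ⟨a, by rw [hPa]; exact ⟨ha, sim_refl a⟩⟩
  · -- disjoint
    intro i j hij
    rw [Set.disjoint_left]
    intro x hxi hxj
    exact hij (hcommon i j x hxi hxj)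
  · -- union
    ext v
    simp only [Set.mem_iUnion]
    constructor
    · rintro ⟨i, hv⟩; exact hmemP i v hv
    · intro hv
      obtain ⟨i, hPi⟩ := hself v hv
      exact ⟨i, by rw [hPi]; exact ⟨hv, sim_refl v⟩⟩
  · -- no cross relations
    intro i j hij a hai b hbj hab
    apply hij
    have hbS : b ∈ S := hmemP j b hbj
    obtain ⟨x, hx, hPx⟩ := hrep i
    have hai' := hai; rw [hPx] at hai'
    have hbi : b ∈ P i := by
      rw [hPx]
      exact ⟨hbS, sim_trans x a b hai'.1 hai'.2 (rel_sim a b hab)⟩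
    exact hcommon i j b hbi hbj
  · -- closed under successors
    intro i a hai b hab
    by_cases hcb : clEq F w b
    · exact Or.inl hcb
    · right
      have hbS : b ∈ S := (hmemS b).2 hcb
      obtain ⟨x, hx, hPx⟩ := hrep i
      have hai' := hai; rw [hPx] at hai'
      rw [hPx]
      exact ⟨hbS, sim_trans x a b hai'.1 hai'.2 (rel_sim a b hab)⟩
  · -- SkInvTree
    intro i
    obtain ⟨x, hx, hPx⟩ := hrep i
    have hPx' : ∀ y, y ∈ P i ↔ y ∈ cls x := fun y => by rw [hPx]
    refine ⟨Subtype.finite, ?_, ?_⟩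
    · intro m m'
      obtain ⟨hmS, hxm⟩ := (hPx' m.1).1 m.2
      obtain ⟨hm'S, hxm'⟩ := (hPx' m'.1).1 m'.2
      have hsim : sim m.1 m'.1 :=
        sim_trans m.1 x m'.1 hx (sim_symm x m.1 hxm) hxm'
      obtain ⟨u, hmu, hm'u⟩ := hsim
      have huS : u ∈ S := hup m.1 hmS u hmu
      have huP : u ∈ P i :=
        (hPx' u).2 ⟨huS, sim_trans x m.1 u hmS hxm ⟨u, hmu, sqle_refl F u⟩⟩
      refine ⟨⟨u, huP⟩, ?_, ?_⟩
      · exact (leInv_restrict_iff F (P i) ⟨u, huP⟩ m).2 hmu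
      · exact (leInv_restrict_iff F (P i) ⟨u, huP⟩ m').2 hm'u
    · intro m w1 w2 h1 h2
      rw [leInv_restrict_iff] at h1 h2
      have hmS : m.1 ∈ S := ((hPx' m.1).1 m.2).1
      rcases comp m.1 hmS w1.1 w2.1 h1 h2 with h | h
      · right; rw [leInv_restrict_iff]; exact h
      · left; rw [leInv_restrict_iff]; exact h
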